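/- arXiv:1004.4348 — 2 statements merged into one kernel-verified Lean document; each statement's English description precedes it below -/
import Mathlib

section
/- For any natural numbers k ≥ 2 and b with 0 ≤ b ≤ 2^k - 3, the binomial coefficient C(2^k + b, 2^k - 2) is even. -/
/-- For `k ≥ 2` and `b ≤ 2^k - 3`, the binomial coefficient `C(2^k + b, 2^k - 2)` is even. -/
theorem choose_pow_add_sub_two_even (k b : ℕ) (hk : 2 ≤ k) (hb : b ≤ 2 ^ k - 3) :
    Even (Nat.choose (2 ^ k + b) (2 ^ k - 2)) := by
  have h4 : 4 ≤ 2 ^ k := by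
    calc (4 : ℕ) = 2 ^ 2 := rfl
    _ ≤ 2 ^ k := Nat.pow_le_pow_right (by norm_num) hk
  have heq : 2 ^ k + b = (b + 2) + (2 ^ k - 2) := by omega
  have hlog : Nat.log 2 ((b + 2) + (2 ^ k - 2)) < k + 1 := by
    apply Nat.log_lt_of_lt_pow (by omega)
    have : 2 ^ (k + 1) = 2 ^ k + 2 ^ k := by ring
    omega
  have hmul := Nat.Prime.emultiplicity_choose' (p := 2) (n := b + 2)
    (k := 2 ^ k - 2) (b := k + 1) Nat.prime_two hlog
  have hmem : k ∈ Finset.filter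
      (fun i => 2 ^ i ≤ (2 ^ k - 2) % 2 ^ i + (b + 2) % 2 ^ i) (Finset.Ico 1 (k + 1)) := by
    simp only [Finset.mem_filter, Finset.mem_Ico]
    refine ⟨⟨by omega, by omega⟩, ?_⟩
    have h1 : (2 ^ k - 2) % 2 ^ k = 2 ^ k - 2 := Nat.mod_eq_of_lt (by omega)
    have h2 : (b + 2) % 2 ^ k = b + 2 := Nat.mod_eq_of_lt (by omega)
    omega
  have hcard : 1 ≤ (Finset.filter
      (fun i => 2 ^ i ≤ (2 ^ k - 2) % 2 ^ i + (b + 2) % 2 ^ i) (Finset.Ico 1 (k + 1))).card :=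
    Finset.card_pos.mpr ⟨k, hmem⟩
  have hdvd : 2 ^ 1 ∣ Nat.choose ((b + 2) + (2 ^ k - 2)) (2 ^ k - 2) := by
    apply pow_dvd_of_le_emultiplicity
    rw [hmul]
    exact_mod_cast Nat.one_le_cast.mpr hcard
  rw [heq, even_iff_two_dvd]
  simpa using hdvd
end

section
/- For any natural numbers k ≥ 2 and b with 0 ≤ b ≤ 2^k - 3, the sum C(2^k + b, 2^k - 2) + C(2^k + b, b) is odd. -/
open Finset in
lemma not_two_dvd_choose_aux (k b : ℕ) (hb : b < 2 ^ k) :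
    ¬ 2 ∣ Nat.choose (2 ^ k + b) b := by
  rw [← emultiplicity_ne_zero, not_ne_iff]
  have hlog : Nat.log 2 (2 ^ k + b) < k + 1 := by
    apply Nat.log_lt_of_lt_pow (by positivity)
    rw [pow_succ]
    omega
  rw [Nat.Prime.emultiplicity_choose' Nat.prime_two hlog]
  have hempty : {i ∈ Ico 1 (k + 1) | 2 ^ i ≤ b % 2 ^ i + 2 ^ k % 2 ^ i} = ∅ := by
    rw [Finset.filter_eq_empty_iff]
    intro i hi
    rw [Finset.mem_Ico] at hi
    have h1 : (2 : ℕ) ^ k % 2 ^ i = 0 := by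
      have : (2:ℕ) ^ i ∣ 2 ^ k := pow_dvd_pow 2 (by omega)
      omega
    have h2 : b % 2 ^ i < 2 ^ i := Nat.mod_lt _ (by positivity)
    omega
  rw [hempty]
  simp

open Finset in
lemma two_dvd_choose_aux (k b : ℕ) (hk : 2 ≤ k) (hb : b ≤ 2 ^ k - 3) :
    2 ∣ Nat.choose (2 ^ k + b) (2 ^ k - 2) := by
  have h4 : 4 ≤ 2 ^ k := by
    calc (4 : ℕ) = 2 ^ 2 := rfl
    _ ≤ 2 ^ k := Nat.pow_le_pow_right (by norm_num) hk
  rw [← emultiplicity_ne_zero]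
  have hlog : Nat.log 2 (2 ^ k + b) < k + 1 := by
    apply Nat.log_lt_of_lt_pow (by positivity)
    rw [pow_succ]
    omega
  rw [Nat.Prime.emultiplicity_choose Nat.prime_two (by omega) hlog]
  have hmem : k ∈ {i ∈ Ico 1 (k + 1) |
      2 ^ i ≤ (2 ^ k - 2) % 2 ^ i + (2 ^ k + b - (2 ^ k - 2)) % 2 ^ i} := by
    rw [Finset.mem_filter, Finset.mem_Ico]
    refine ⟨⟨by omega, by omega⟩, ?_⟩
    have e1 : 2 ^ k + b - (2 ^ k - 2) = b + 2 := by omega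
    have e2 : (2 ^ k - 2) % 2 ^ k = 2 ^ k - 2 := Nat.mod_eq_of_lt (by omega)
    have e3 : (b + 2) % 2 ^ k = b + 2 := Nat.mod_eq_of_lt (by omega)
    rw [e1, e2, e3]
    omega
  intro h0
  have hc : #{i ∈ Ico 1 (k + 1) |
      2 ^ i ≤ (2 ^ k - 2) % 2 ^ i + (2 ^ k + b - (2 ^ k - 2)) % 2 ^ i} = 0 := by
    exact_mod_cast h0
  rw [Finset.card_eq_zero] at hc
  rw [hc] at hmem
  simp at hmem

/-- For `k ≥ 2` and `b ≤ 2^k - 3`, the sum `C(2^k + b, 2^k - 2) + C(2^k + b, b)` is odd. -/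
theorem choose_sum_odd (k b : ℕ) (hk : 2 ≤ k) (hb : b ≤ 2 ^ k - 3) :
    Odd (Nat.choose (2 ^ k + b) (2 ^ k - 2) + Nat.choose (2 ^ k + b) b) := by
  have h4 : 4 ≤ 2 ^ k := by
    calc (4 : ℕ) = 2 ^ 2 := rfl
    _ ≤ 2 ^ k := Nat.pow_le_pow_right (by norm_num) hk
  have heven : Even (Nat.choose (2 ^ k + b) (2 ^ k - 2)) :=
    (even_iff_two_dvd).mpr (two_dvd_choose_aux k b hk hb)
  have hodd : Odd (Nat.choose (2 ^ k + b) b) := by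
    have := not_two_dvd_choose_aux k b (by omega)
    rcases Nat.even_or_odd (Nat.choose (2 ^ k + b) b) with h | h
    · exact absurd (even_iff_two_dvd.mp h) this
    · exact h
  exact heven.add_odd hodd
end
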